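/- arXiv:2210.07389 — 2 statements merged into one kernel-verified Lean document; each statement's English description precedes it below -/
import Mathlib

section
/- There exists an increasing homeomorphism ψ : [-1,1] → [-1,1] with ψ(-1) = -1 and ψ(1) = 1 such that, with λ = (1+√5)/2, the map ψ∘f̃_A∘ψ⁻¹ is affine with slope λ (i.e., of the form x ↦ λx + c for a constant c) on each of the four intervals ψ([-1,-1/2)), ψ([-1/2,0)), ψ((0,1/2)), ψ([1/2,1)), and simultaneously the map ψ∘f̃_H∘ψ⁻¹ is affine with slope λ on each of the four intervals ψ([-1,-1/3)), ψ([-1/3,0)), ψ((0,1/3)), ψ([1/3,1)). -/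
/-- The compactified translation `T̃ = k ∘ T ∘ k⁻¹`, `T(x) = x + 1`, on `[-1,1)`. -/
noncomputable def Ttilde (x : ℝ) : ℝ :=
  if x ≤ -1/2 then -2 - 1/x
  else if x ≤ 0 then (1 + 2*x) / (2 + 3*x)
  else 1 / (2 - x)

/-- The compactified inversion `S̃ = k ∘ S ∘ k⁻¹`, `S(x) = -1/x`, on `[-1,1)`. -/
noncomputable def Stilde (x : ℝ) : ℝ :=
  if x < 0 then x + 1 else if x = 0 then -1 else x - 1

/-- The compactified inverse translation `T̃⁻¹ = k ∘ T⁻¹ ∘ k⁻¹` on `[-1,1)`. -/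
noncomputable def Tinvtilde (x : ℝ) : ℝ :=
  if x ≤ 0 then -1 / (2 + x)
  else if x ≤ 1/2 then (1 - 2*x) / (3*x - 2)
  else 2 - 1/x

/-- The compactified `(a,b)`-continued fraction map `f̃_{a,b}` on `[-1,1)`. -/
noncomputable def ftilde (a b : ℝ) (x : ℝ) : ℝ :=
  if x < a / (1 - a) then Ttilde x
  else if x < b / (1 + b) then Stilde x
  else Tinvtilde x

/-- The Artin map `f̃_A = f̃_{-1,1}`. -/
noncomputable def fA : ℝ → ℝ := ftilde (-1) 1

/-- The Hurwitz map `f̃_H = f̃_{-1/2,1/2}`. -/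
noncomputable def fH : ℝ → ℝ := ftilde (-1/2) (1/2)

open Set Filter Topology

noncomputable def gl : ℝ := (1 + Real.sqrt 5) / 2

lemma gl_sq : gl ^ 2 = gl + 1 := by
  have h5 : Real.sqrt 5 ^ 2 = 5 := Real.sq_sqrt (by norm_num)
  unfold gl; nlinarith [h5]

lemma one_lt_gl : 1 < gl := by
  have : (1:ℝ) < Real.sqrt 5 := by
    have := Real.lt_sqrt (x := 1) (y := 5) (by norm_num)
    rw [this]; norm_num
  unfold gl; linarith

lemma gl_pos : 0 < gl := by linarith [one_lt_gl]

lemma continuousOn_union_closed {f : ℝ → ℝ} {s t : Set ℝ} (hs : IsClosed s) (ht : IsClosed t)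
    (hfs : ContinuousOn f s) (hft : ContinuousOn f t) : ContinuousOn f (s ∪ t) := by
  intro x hx
  apply ContinuousWithinAt.union
  · by_cases hxs : x ∈ s
    · exact hfs x hxs
    · exact continuousWithinAt_of_notMem_closure (by rwa [hs.closure_eq])
  · by_cases hxt : x ∈ t
    · exact hft x hxt
    · exact continuousWithinAt_of_notMem_closure (by rwa [ht.closure_eq])

noncomputable def Jm (x : ℝ) : ℝ := (1 - 2*x) / (1 - x)
noncomputable def Km (x : ℝ) : ℝ := 2 - 1/x

lemma Jm_mem {x : ℝ} (h0 : 0 ≤ x) (h1 : x ≤ 1/2) : Jm x ∈ Icc (0:ℝ) 1 := by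
  have hx : 0 < 1 - x := by linarith
  constructor
  · unfold Jm; apply div_nonneg (by linarith) hx.le
  · unfold Jm; rw [div_le_one hx]; linarith

lemma Km_mem {x : ℝ} (h0 : 1/2 ≤ x) (h1 : x ≤ 1) : Km x ∈ Icc (0:ℝ) 1 := by
  have hx : 0 < x := by linarith
  constructor
  · have : 1/x ≤ 2 := by rw [div_le_iff₀ hx]; linarith
    unfold Km; linarith
  · have : 1 ≤ 1/x := by rw [le_div_iff₀ hx]; linarith
    unfold Km; linarith

noncomputable def phiSeq : ℕ → ℝ → ℝ
  | 0, x => x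
  | n+1, x => if x ≤ 1/2 then (1 - phiSeq n (Jm x)) / gl^2
              else (phiSeq n (Km x) + gl - 1) / gl

lemma phiSeq_one : ∀ n, phiSeq n 1 = 1 := by
  intro n; induction n with
  | zero => rfl
  | succ n ih =>
    have : ¬ ((1:ℝ) ≤ 1/2) := by norm_num
    simp only [phiSeq, this, if_false]
    have : Km 1 = 1 := by unfold Km; norm_num
    rw [this, ih]
    have := gl_pos
    field_simp
    ring

lemma phiSeq_zero : ∀ n, phiSeq n 0 = 0 := by
  intro n; induction n with
  | zero => rfl
  | succ n _ =>
    have h : ((0:ℝ) ≤ 1/2) := by norm_num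
    simp only [phiSeq, h, if_true]
    have : Jm 0 = 1 := by unfold Jm; norm_num
    rw [this, phiSeq_one]; simp

lemma phiSeq_mem : ∀ n, ∀ x ∈ Icc (0:ℝ) 1, phiSeq n x ∈ Icc (0:ℝ) 1 := by
  intro n; induction n with
  | zero => intro x hx; exact hx
  | succ n ih =>
    intro x hx
    by_cases h : x ≤ 1/2
    · simp only [phiSeq, h, if_true]
      have hJ := ih _ (Jm_mem hx.1 h)
      have h2 : (0:ℝ) < gl^2 := by nlinarith [gl_pos]
      constructor
      · apply div_nonneg (by linarith [hJ.2]) h2.le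
      · rw [div_le_one h2]; nlinarith [hJ.1, gl_sq, one_lt_gl]
    · simp only [phiSeq, h, if_false]
      push_neg at h
      have hK := ih _ (Km_mem h.le hx.2)
      have hg := one_lt_gl
      constructor
      · apply div_nonneg (by linarith [hK.1]) (by linarith)
      · rw [div_le_one (by linarith)]; linarith [hK.2]

lemma Jm_anti {x y : ℝ} (hx : 0 ≤ x) (hxy : x ≤ y) (hy : y ≤ 1/2) : Jm y ≤ Jm x := by
  unfold Jm
  rw [div_le_div_iff₀ (by linarith) (by linarith)]
  nlinarith

lemma Km_mono {x y : ℝ} (hx : 1/2 ≤ x) (hxy : x ≤ y) : Km x ≤ Km y := by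
  have hx0 : 0 < x := by linarith
  have hy0 : 0 < y := by linarith
  unfold Km
  have : 1/y ≤ 1/x := by
    rw [div_le_div_iff₀ hy0 hx0]; linarith
  linarith

lemma phiSeq_monoOn : ∀ n, MonotoneOn (phiSeq n) (Icc (0:ℝ) 1) := by
  intro n; induction n with
  | zero => exact fun x _ y _ h => h
  | succ n ih =>
    intro x hx y hy hxy
    have hg := one_lt_gl
    have hg2 : (0:ℝ) < gl^2 := by nlinarith
    by_cases h1 : x ≤ 1/2
    · by_cases h2 : y ≤ 1/2
      · simp only [phiSeq, h1, h2, if_true]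
        have hJy := Jm_mem hy.1 h2
        have hJx := Jm_mem hx.1 h1
        have := ih hJy hJx (Jm_anti hx.1 hxy h2)
        apply div_le_div_of_nonneg_right (by linarith) hg2.le |>.trans_eq rfl
      · simp only [phiSeq, h1, h2, if_true, if_false]
        push_neg at h2
        -- key : both sides compared through value at 1/2
        have hJx := Jm_mem hx.1 h1
        have hKy := Km_mem h2.le hy.2
        have hJ0 : phiSeq n (Jm x) ∈ Icc (0:ℝ) 1 := phiSeq_mem n _ hJx
        have hK0 : phiSeq n (Km y) ∈ Icc (0:ℝ) 1 := phiSeq_mem n _ hKy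
        have hL : (1 - phiSeq n (Jm x)) / gl^2 ≤ 1 / gl^2 :=
          div_le_div_of_nonneg_right (by linarith [hJ0.1]) hg2.le |>.trans_eq rfl
        have hR : (gl - 1)/gl ≤ (phiSeq n (Km y) + gl - 1) / gl :=
          div_le_div_of_nonneg_right (by linarith [hK0.1]) (by linarith : (0:ℝ) ≤ gl) |>.trans_eq rfl
        have heq : (1:ℝ)/gl^2 = (gl - 1)/gl := by
          rw [div_eq_div_iff hg2.ne' (by linarith : gl ≠ 0)]; nlinarith [gl_sq]
        linarith [hL, hR, heq ▸ hL]
    · have h2 : ¬ y ≤ 1/2 := by push_neg at h1 ⊢; linarith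
      simp only [phiSeq, h1, h2, if_false]
      push_neg at h1
      have hKx := Km_mem h1.le hx.2
      have hKy := Km_mem (by linarith : 1/2 ≤ y) hy.2
      have := ih hKx hKy (Km_mono h1.le hxy)
      exact div_le_div_of_nonneg_right (by linarith) (by linarith : (0:ℝ) ≤ gl)

lemma phiSeq_contOn : ∀ n, ContinuousOn (phiSeq n) (Icc (0:ℝ) 1) := by
  intro n; induction n with
  | zero => exact continuousOn_id
  | succ n ih =>
    have hg := one_lt_gl
    have hg2 : (0:ℝ) < gl^2 := by nlinarith
    have hIcc : Icc (0:ℝ) 1 = Icc (0:ℝ) (1/2) ∪ Icc (1/2) 1 := by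
      rw [Icc_union_Icc_eq_Icc] <;> norm_num
    rw [hIcc]
    apply continuousOn_union_closed isClosed_Icc isClosed_Icc
    · -- on [0,1/2] the function equals the first branch
      have : EqOn (phiSeq (n+1)) (fun x => (1 - phiSeq n (Jm x)) / gl^2) (Icc (0:ℝ) (1/2)) := by
        intro x hx
        simp only [phiSeq, hx.2, if_true]
      apply ContinuousOn.congr _ this
      apply ContinuousOn.div_const
      apply ContinuousOn.sub continuousOn_const
      apply ContinuousOn.comp ih _ (fun x hx => Jm_mem hx.1 hx.2)
      apply ContinuousOn.div (by fun_prop) (by fun_prop)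
      intro x hx h; have := hx.2; linarith
    · -- on [1/2,1] the function equals the second branch
      have : EqOn (phiSeq (n+1)) (fun x => (phiSeq n (Km x) + gl - 1) / gl) (Icc (1/2:ℝ) 1) := by
        intro x hx
        rcases eq_or_lt_of_le hx.1 with h | h
        · -- x = 1/2 : both branches agree
          simp only [phiSeq, ← h, if_pos (le_refl (1/2:ℝ))]
          have hJ : Jm (1/2) = 0 := by unfold Jm; norm_num
          have hK : Km (1/2) = 0 := by unfold Km; norm_num
          rw [hJ, hK, phiSeq_zero]
          rw [div_eq_div_iff hg2.ne' (by linarith : gl ≠ 0)]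
          nlinarith [gl_sq]
        · simp only [phiSeq, not_le.mpr h, if_false]
      apply ContinuousOn.congr _ this
      apply ContinuousOn.div_const
      apply ContinuousOn.sub _ continuousOn_const
      apply ContinuousOn.add _ continuousOn_const
      apply ContinuousOn.comp ih _ (fun x hx => Km_mem hx.1 hx.2)
      apply ContinuousOn.sub continuousOn_const
      apply ContinuousOn.div continuousOn_const (by fun_prop)
      intro x hx; intro h; rw [h] at hx; have := hx.1; norm_num at this

lemma phiSeq_diff : ∀ n, ∀ x ∈ Icc (0:ℝ) 1,
    |phiSeq (n+1) x - phiSeq n x| ≤ (1/gl)^n := by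
  intro n; induction n with
  | zero =>
    intro x hx
    have h1 := phiSeq_mem 1 x hx
    have h0 := phiSeq_mem 0 x hx
    rw [pow_zero, abs_le]
    constructor
    · linarith [h1.1, h0.2]
    · linarith [h1.2, h0.1]
  | succ n ih =>
    intro x hx
    have hg := one_lt_gl
    have hgpos : (0:ℝ) < gl := by linarith
    have hg2 : (0:ℝ) < gl^2 := by nlinarith
    have hp : (0:ℝ) < (1/gl)^n := by positivity
    by_cases h : x ≤ 1/2
    · have hJ := Jm_mem hx.1 h
      have key := ih _ hJ
      have e : phiSeq (n+2) x - phiSeq (n+1) x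
          = (phiSeq n (Jm x) - phiSeq (n+1) (Jm x))/gl^2 := by
        simp only [phiSeq, h, if_true]; ring
      rw [e, abs_div, abs_of_pos hg2, abs_sub_comm]
      calc |phiSeq (n+1) (Jm x) - phiSeq n (Jm x)| / gl^2
          ≤ (1/gl)^n / gl^2 := div_le_div_of_nonneg_right key hg2.le
        _ ≤ (1/gl)^n / gl := div_le_div_of_nonneg_left hp.le hgpos (by nlinarith)
        _ = (1/gl)^(n+1) := by rw [pow_succ]; ring
    · push_neg at h
      have hK := Km_mem h.le hx.2
      have key := ih _ hK
      have e : phiSeq (n+2) x - phiSeq (n+1) x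
          = (phiSeq (n+1) (Km x) - phiSeq n (Km x))/gl := by
        simp only [phiSeq, not_le.mpr h, if_false]; ring
      rw [e, abs_div, abs_of_pos hgpos]
      calc |phiSeq (n+1) (Km x) - phiSeq n (Km x)| / gl
          ≤ (1/gl)^n / gl := div_le_div_of_nonneg_right key hgpos.le
        _ = (1/gl)^(n+1) := by rw [pow_succ]; ring

lemma phiSeq_cauchy (x : ℝ) (hx : x ∈ Icc (0:ℝ) 1) : CauchySeq (fun n => phiSeq n x) := by
  apply cauchySeq_of_le_geometric (1/gl) 1
  · rw [div_lt_one gl_pos]; exact one_lt_gl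
  · intro n
    rw [Real.dist_eq, one_mul]
    exact abs_sub_comm (phiSeq n x) (phiSeq (n+1) x) ▸ phiSeq_diff n x hx

noncomputable def phi (x : ℝ) : ℝ := limUnder atTop (fun n => phiSeq n x)

lemma phi_tendsto {x : ℝ} (hx : x ∈ Icc (0:ℝ) 1) :
    Tendsto (fun n => phiSeq n x) atTop (𝓝 (phi x)) := by
  obtain ⟨L, hL⟩ := cauchySeq_tendsto_of_complete (phiSeq_cauchy x hx)
  rwa [phi, hL.limUnder_eq]

lemma phi_zero : phi 0 = 0 := by
  have h := phi_tendsto (x := 0) (by norm_num)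
  have : Tendsto (fun n => phiSeq n 0) atTop (𝓝 0) := by
    simp only [phiSeq_zero]; exact tendsto_const_nhds
  exact tendsto_nhds_unique h this

lemma phi_one : phi 1 = 1 := by
  have h := phi_tendsto (x := 1) (by norm_num)
  have : Tendsto (fun n => phiSeq n 1) atTop (𝓝 1) := by
    simp only [phiSeq_one]; exact tendsto_const_nhds
  exact tendsto_nhds_unique h this

lemma phi_mem {x : ℝ} (hx : x ∈ Icc (0:ℝ) 1) : phi x ∈ Icc (0:ℝ) 1 := by
  constructor
  · exact ge_of_tendsto (phi_tendsto hx) (Eventually.of_forall fun n => (phiSeq_mem n x hx).1)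
  · exact le_of_tendsto (phi_tendsto hx) (Eventually.of_forall fun n => (phiSeq_mem n x hx).2)

lemma phi_monoOn : MonotoneOn phi (Icc (0:ℝ) 1) := by
  intro x hx y hy hxy
  exact le_of_tendsto_of_tendsto' (phi_tendsto hx) (phi_tendsto hy)
    (fun n => phiSeq_monoOn n hx hy hxy)

lemma phi_FE1 {x : ℝ} (h0 : 0 ≤ x) (h1 : x ≤ 1/2) :
    phi x = (1 - phi (Jm x)) / gl^2 := by
  have hx : x ∈ Icc (0:ℝ) 1 := ⟨h0, by linarith⟩
  have hJ := Jm_mem h0 h1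
  have t1 : Tendsto (fun n => phiSeq (n+1) x) atTop (𝓝 (phi x)) :=
    (phi_tendsto hx).comp (tendsto_add_atTop_nat 1)
  have t2 : Tendsto (fun n => (1 - phiSeq n (Jm x)) / gl^2) atTop (𝓝 ((1 - phi (Jm x)) / gl^2)) := by
    apply Tendsto.div_const
    exact (tendsto_const_nhds.sub (phi_tendsto hJ))
  have : (fun n => phiSeq (n+1) x) = fun n => (1 - phiSeq n (Jm x)) / gl^2 := by
    funext n; simp only [phiSeq, h1, if_true]
  rw [this] at t1
  exact tendsto_nhds_unique t1 t2

lemma phi_half : phi (1/2) = 1/gl^2 := by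
  have := phi_FE1 (x := 1/2) (by norm_num) (le_refl _)
  have hJ : Jm (1/2) = 0 := by unfold Jm; norm_num
  rw [hJ, phi_zero] at this
  simpa using this

lemma phi_FE2 {x : ℝ} (h0 : 1/2 ≤ x) (h1 : x ≤ 1) :
    phi x = (phi (Km x) + gl - 1) / gl := by
  have hg := one_lt_gl
  have hg2 : (0:ℝ) < gl^2 := by nlinarith
  rcases eq_or_lt_of_le h0 with h | h
  · rw [← h]
    have hK : Km (1/2) = 0 := by unfold Km; norm_num
    rw [hK, phi_zero, phi_half]
    rw [div_eq_div_iff hg2.ne' (by linarith : gl ≠ 0)]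
    nlinarith [gl_sq]
  · have hx : x ∈ Icc (0:ℝ) 1 := ⟨by linarith, h1⟩
    have hK := Km_mem h0 h1
    have t1 : Tendsto (fun n => phiSeq (n+1) x) atTop (𝓝 (phi x)) :=
      (phi_tendsto hx).comp (tendsto_add_atTop_nat 1)
    have t2 : Tendsto (fun n => (phiSeq n (Km x) + gl - 1) / gl) atTop
        (𝓝 ((phi (Km x) + gl - 1) / gl)) := by
      apply Tendsto.div_const
      exact ((phi_tendsto hK).add tendsto_const_nhds).sub tendsto_const_nhds
    have : (fun n => phiSeq (n+1) x) = fun n => (phiSeq n (Km x) + gl - 1) / gl := by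
      funext n; simp only [phiSeq, not_le.mpr h, if_false]
    rw [this] at t1
    exact tendsto_nhds_unique t1 t2

lemma phi_contOn : ContinuousOn phi (Icc (0:ℝ) 1) := by
  have hg := one_lt_gl
  have hr : (1:ℝ)/gl < 1 := by rw [div_lt_one gl_pos]; exact hg
  have hr0 : (0:ℝ) ≤ 1/gl := by positivity
  apply TendstoUniformlyOn.continuousOn (F := phiSeq)
    (p := atTop) ?_ (Eventually.of_forall phiSeq_contOn).frequently
  rw [Metric.tendstoUniformlyOn_iff]
  intro ε hε
  have hC : (0:ℝ) < gl/(gl-1) := by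
    apply div_pos gl_pos; linarith
  have htend : Tendsto (fun n => gl/(gl-1) * (1/gl)^n) atTop (𝓝 0) := by
    have := tendsto_pow_atTop_nhds_zero_of_lt_one hr0 hr
    simpa using this.const_mul (gl/(gl-1))
  have hev : ∀ᶠ n in atTop, gl/(gl-1) * (1/gl)^n < ε := by
    have := htend.eventually (eventually_lt_nhds hε)
    exact this
  filter_upwards [hev] with n hn x hx
  rw [dist_comm, Real.dist_eq]
  have hb : ∀ m, dist (phiSeq m x) (phiSeq (m+1) x) ≤ 1 * (1/gl)^m := by
    intro m
    rw [Real.dist_eq, one_mul]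
    exact abs_sub_comm (phiSeq m x) (phiSeq (m+1) x) ▸ phiSeq_diff m x hx
  have := dist_le_of_le_geometric_of_tendsto (r := 1/gl) 1 hr hb (phi_tendsto hx) n
  have hsum : 1 * (1/gl)^n / (1 - 1/gl) = gl/(gl-1) * (1/gl)^n := by
    rw [one_mul]
    field_simp
  rw [Real.dist_eq] at this
  calc |phiSeq n x - phi x| ≤ 1 * (1/gl)^n / (1 - 1/gl) := this
    _ = gl/(gl-1) * (1/gl)^n := hsum
    _ < ε := hn

/-- `φ(1-u) = 1 - λ φ(u)` for `u ∈ [0,1/2]`. -/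
lemma phi_I {u : ℝ} (h0 : 0 ≤ u) (h1 : u ≤ 1/2) :
    phi (1 - u) = 1 - gl * phi u := by
  have hg := one_lt_gl
  have hg2 : (0:ℝ) < gl^2 := by nlinarith
  have hKeq : Km (1 - u) = Jm u := by
    unfold Km Jm
    rw [eq_div_iff (by linarith : (1:ℝ) - u ≠ 0)]
    have hne : (1:ℝ) - u ≠ 0 := by linarith
    field_simp
    ring
  have h2 := phi_FE2 (x := 1 - u) (by linarith) (by linarith)
  rw [hKeq] at h2
  have h1' := phi_FE1 h0 h1
  have hphiJ : phi (Jm u) = 1 - gl^2 * phi u := by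
    rw [h1']; field_simp
    ring
  rw [h2, hphiJ]
  rw [div_eq_iff (by linarith : gl ≠ 0)]
  nlinarith [gl_sq]

/-- The involution `σ(t) = (1-2t)/(2-3t)` exchanging `[0,1/3]` and `[1/3,1/2]`. -/
noncomputable def sg (t : ℝ) : ℝ := (1 - 2*t) / (2 - 3*t)

lemma sg_mem {t : ℝ} (h0 : 0 ≤ t) (h1 : t ≤ 1/3) :
    1/3 ≤ sg t ∧ sg t ≤ 1/2 := by
  have hd : 0 < 2 - 3*t := by linarith
  unfold sg
  constructor
  · rw [le_div_iff₀ hd]; linarith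
  · rw [div_le_iff₀ hd]; linarith

lemma sg_invol {t : ℝ} (h1 : t < 2/3) : sg (sg t) = t := by
  have hd : 0 < 2 - 3*t := by linarith
  have hd' : (2 - 3*t) ≠ 0 := hd.ne'
  have hd'' : (2 - t*3) ≠ 0 := (by linarith : (0:ℝ) < 2 - t*3).ne'
  unfold sg
  rw [div_eq_iff, eq_comm]
  · field_simp
    ring
  · intro h
    rw [sub_eq_zero] at h
    have : (2 - 3*t) * 2 = 3 * (1 - 2*t) := by
      field_simp at h
      linarith [h]
    linarith

/-- Key identity: `φ(t) + λ φ(σ(t)) = λ - 1` for `t ∈ [0,1/3]`. -/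
lemma phi_E {t : ℝ} (h0 : 0 ≤ t) (h1 : t ≤ 1/3) :
    phi t + gl * phi (sg t) = gl - 1 := by
  have hg := one_lt_gl
  have hg0 : (0:ℝ) < gl := by linarith
  have hg2 : (0:ℝ) < gl^2 := by nlinarith
  have hd1 : (0:ℝ) < 1 - t := by linarith
  have hd2 : (0:ℝ) < 1 - 2*t := by linarith
  have hd3 : (0:ℝ) < 2 - 3*t := by linarith
  have hd3' : (2 - 3*t) ≠ 0 := hd3.ne'
  have hd3'' : (2 - t*3) ≠ 0 := (by linarith : (0:ℝ) < 2 - t*3).ne'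
  set w : ℝ := (1 - 3*t) / (1 - 2*t) with hw
  -- step 1 : φ t = (1 - φ w)/λ³
  have hJt : Jm t = (1 - 2*t)/(1 - t) := rfl
  have hJt_ge : 1/2 ≤ Jm t := by
    rw [hJt, le_div_iff₀ hd1]; linarith
  have hJt_le : Jm t ≤ 1 := by
    rw [hJt, div_le_one hd1]; linarith
  have hKJt : Km (Jm t) = w := by
    unfold Km Jm
    rw [hw, one_div_div, eq_div_iff hd2.ne', sub_mul,
      div_mul_eq_mul_div, mul_comm, mul_div_assoc, div_self hd2.ne', mul_one]
    ring
  have e1 : phi t = (1 - phi (Jm t))/gl^2 := phi_FE1 h0 (by linarith)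
  have e2 : phi (Jm t) = (phi w + gl - 1)/gl := by
    have := phi_FE2 hJt_ge hJt_le
    rwa [hKJt] at this
  -- step 2 : φ (sg t) = (λ + φ w)/λ⁴
  have hs0 : 1/3 ≤ sg t := (sg_mem h0 h1).1
  have hs1 : sg t ≤ 1/2 := (sg_mem h0 h1).2
  have hJs : Jm (sg t) = t / (1 - t) := by
    unfold Jm sg
    rw [div_eq_div_iff _ hd1.ne']
    · field_simp
      ring
    · intro h
      rw [sub_eq_zero] at h
      field_simp at h
      linarith
  have ht1_mem0 : 0 ≤ t/(1-t) := div_nonneg h0 hd1.le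
  have ht1_mem1 : t/(1-t) ≤ 1/2 := by
    rw [div_le_div_iff₀ hd1 (by norm_num : (0:ℝ) < 2)]; linarith
  have hJtt : Jm (t/(1-t)) = w := by
    unfold Jm
    rw [hw, div_eq_div_iff _ hd2.ne']
    · field_simp
      ring
    · intro h
      rw [sub_eq_zero] at h
      field_simp at h
      linarith
  have e3 : phi (sg t) = (1 - phi (Jm (sg t)))/gl^2 := phi_FE1 (by linarith) hs1
  have e4 : phi (t/(1-t)) = (1 - phi w)/gl^2 := by
    have := phi_FE1 ht1_mem0 ht1_mem1
    rwa [hJtt] at this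
  rw [hJs, e4] at e3
  rw [e1, e2, e3]
  have h3 : gl^2 = gl + 1 := gl_sq
  field_simp
  ring_nf
  linear_combination (-gl^2) * gl_sq

lemma phi_lt_one_aux : ∀ n : ℕ, ∀ d : ℝ, 0 ≤ d → d < 1 → 1/(1-d) ≤ n + 2 → phi d < 1 := by
  intro n
  induction n with
  | zero =>
    intro d h0 h1 hb
    have hd : (0:ℝ) < 1 - d := by linarith
    have : d ≤ 1/2 := by
      rw [div_le_iff₀ hd] at hb; push_cast at hb; nlinarith
    calc phi d ≤ phi (1/2) := phi_monoOn ⟨h0, by linarith⟩ (by norm_num) this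
      _ = 1/gl^2 := phi_half
      _ < 1 := by
          rw [div_lt_one (by nlinarith [gl_pos] : (0:ℝ) < gl^2)]
          nlinarith [one_lt_gl]
  | succ n ih =>
    intro d h0 h1 hb
    have hd : (0:ℝ) < 1 - d := by linarith
    by_cases h : d ≤ 1/2
    · calc phi d ≤ phi (1/2) := phi_monoOn ⟨h0, by linarith⟩ (by norm_num) h
        _ = 1/gl^2 := phi_half
        _ < 1 := by
            rw [div_lt_one (by nlinarith [gl_pos] : (0:ℝ) < gl^2)]
            nlinarith [one_lt_gl]
    · push_neg at h
      have hd0 : (0:ℝ) < d := by linarith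
      have hK0 : 0 ≤ Km d := (Km_mem h.le h1.le).1
      have hK1 : Km d < 1 := by
        unfold Km
        have : 1 < 1/d := by rw [lt_div_iff₀ hd0]; linarith
        linarith
      have hKu : 1/(1 - Km d) ≤ (n:ℝ) + 2 := by
        have he : 1 - Km d = (1-d)/d := by unfold Km; field_simp; ring
        rw [he, one_div_div]
        have : d/(1-d) = 1/(1-d) - 1 := by field_simp; ring
        rw [this]
        push_cast at hb
        linarith
      have := ih (Km d) hK0 hK1 hKu
      rw [phi_FE2 h.le h1.le]
      rw [div_lt_one gl_pos]
      linarith [one_lt_gl]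

lemma phi_lt_one {d : ℝ} (h0 : 0 ≤ d) (h1 : d < 1) : phi d < 1 := by
  obtain ⟨n, hn⟩ := exists_nat_ge (1/(1-d))
  exact phi_lt_one_aux n d h0 h1 (by push_cast; linarith)

lemma phi_pos {c : ℝ} (h0 : 0 < c) (h1 : c ≤ 1) : 0 < phi c := by
  have hg2 : (0:ℝ) < gl^2 := by nlinarith [gl_pos]
  by_cases h : 1/2 ≤ c
  · calc (0:ℝ) < 1/gl^2 := by positivity
      _ = phi (1/2) := phi_half.symm
      _ ≤ phi c := phi_monoOn (by norm_num) ⟨by linarith, h1⟩ h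
  · push_neg at h
    rw [phi_FE1 h0.le h.le]
    have hJ1 : Jm c < 1 := by
      unfold Jm
      rw [div_lt_one (by linarith)]
      linarith
    have hJ0 : 0 ≤ Jm c := (Jm_mem h0.le h.le).1
    have := phi_lt_one hJ0 hJ1
    apply div_pos (by linarith) hg2

/-- straddle case -/
lemma phi_straddle {a b : ℝ} (h0 : 0 ≤ a) (hab : a < b) (hb : b ≤ 1)
    (ha2 : a ≤ 1/2) (hb2 : 1/2 ≤ b) : phi a < phi b := by
  have hg := one_lt_gl
  have hg2 : (0:ℝ) < gl^2 := by nlinarith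
  have key1 : a < 1/2 → phi a < phi (1/2) := by
    intro h
    rw [phi_FE1 h0 ha2, phi_half]
    have hJ0 : 0 < Jm a := by
      unfold Jm
      apply div_pos (by linarith) (by linarith)
    have hJ1 : Jm a ≤ 1 := (Jm_mem h0 ha2).2
    have := phi_pos hJ0 hJ1
    rw [div_lt_div_iff₀ hg2 hg2]
    nlinarith
  have key2 : 1/2 < b → phi (1/2) < phi b := by
    intro h
    rw [phi_FE2 h.le hb, phi_half]
    have hK0 : 0 < Km b := by
      unfold Km
      have hb0 : (0:ℝ) < b := by linarith
      have : 1/b < 2 := by rw [div_lt_iff₀ hb0]; linarith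
      linarith
    have hK1 : Km b ≤ 1 := (Km_mem (by linarith) hb).2
    have := phi_pos hK0 hK1
    rw [div_lt_div_iff₀ hg2 gl_pos]
    nlinarith [gl_sq]
  rcases lt_or_eq_of_le ha2 with h | h
  · calc phi a < phi (1/2) := key1 h
      _ ≤ phi b := phi_monoOn (by norm_num) ⟨by linarith, hb⟩ hb2
  · subst h
    exact key2 (lt_of_le_of_lt (le_of_eq rfl) hab)

lemma phi_kphase : ∀ n : ℕ, ∀ a b : ℝ, 1/2 ≤ a → a < b → b < 1 → 1/(1-a) ≤ n + 2 →
    phi a < phi b ∨ ∃ a' b' : ℝ, 0 ≤ a' ∧ a' < b' ∧ b' < 1/2 ∧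
      1/(1-b') - 1/(1-a') = 1/(1-b) - 1/(1-a) ∧ (phi a' < phi b' → phi a < phi b) := by
  intro n
  induction n with
  | zero =>
    intro a b ha hab hb1 hu
    -- base case: forces a = 1/2
    have hd : (0:ℝ) < 1 - a := by linarith
    have ha' : a ≤ 1/2 := by
      rw [div_le_iff₀ hd] at hu; push_cast at hu; nlinarith
    have haeq : a = 1/2 := le_antisymm ha' ha
    left
    exact phi_straddle (by linarith) hab hb1.le (by linarith) (by linarith)
  | succ n ih =>
    intro a b ha hab hb1 hu
    have ha0 : (0:ℝ) < a := by linarith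
    have hb0 : (0:ℝ) < b := by linarith
    have hda : (0:ℝ) < 1 - a := by linarith
    have hdb : (0:ℝ) < 1 - b := by linarith
    -- facts about K
    have hKa0 : 0 ≤ Km a := (Km_mem ha (by linarith)).1
    have hKab : Km a < Km b := by
      unfold Km
      have : 1/b < 1/a := by rw [div_lt_div_iff₀ hb0 ha0]; linarith
      linarith
    have hKb1 : Km b < 1 := by
      unfold Km
      have : 1 < 1/b := by rw [lt_div_iff₀ hb0]; linarith
      linarith
    have hb2 : 1/2 ≤ b := by linarith
    have hgood : phi (Km a) < phi (Km b) → phi a < phi b := by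
      intro h
      rw [phi_FE2 ha (by linarith), phi_FE2 hb2 hb1.le]
      rw [div_lt_div_iff₀ gl_pos gl_pos]
      nlinarith [gl_pos]
    have huKa : 1/(1 - Km a) = 1/(1-a) - 1 := by
      have he : 1 - Km a = (1-a)/a := by unfold Km; field_simp; ring
      rw [he, one_div_div]
      field_simp
      ring
    have huKb : 1/(1 - Km b) = 1/(1-b) - 1 := by
      have he : 1 - Km b = (1-b)/b := by unfold Km; field_simp; ring
      rw [he, one_div_div]
      field_simp
      ring
    by_cases hc1 : Km b < 1/2
    · right
      exact ⟨Km a, Km b, hKa0, hKab, hc1, by rw [huKa, huKb]; ring, hgood⟩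
    · push_neg at hc1
      by_cases hc2 : Km a < 1/2
      · left
        exact hgood (phi_straddle hKa0 hKab hKb1.le hc2.le hc1)
      · push_neg at hc2
        have hu' : 1/(1 - Km a) ≤ (n:ℝ) + 2 := by
          rw [huKa]; push_cast at hu; linarith
        rcases ih (Km a) (Km b) hc2 hKab hKb1 hu' with h | ⟨a', b', h1, h2, h3, h4, h5⟩
        · exact Or.inl (hgood h)
        · right
          refine ⟨a', b', h1, h2, h3, ?_, fun h => hgood (h5 h)⟩
          rw [h4, huKa, huKb]; ring

lemma inv_one_sub_diff {x y : ℝ} (hx : x < 1) (hy : y < 1) :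
    1/(1-y) - 1/(1-x) = (y - x)/((1-x)*(1-y)) := by
  have h1 : (0:ℝ) < 1 - x := by linarith
  have h2 : (0:ℝ) < 1 - y := by linarith
  rw [div_sub_div _ _ h2.ne' h1.ne', div_eq_div_iff (by positivity) (by positivity)]
  ring

lemma inv_one_sub_Jm {x : ℝ} (h0 : 0 < x) (h1 : x ≤ 1/2) :
    1/(1 - Jm x) = 1/x - 1 := by
  have hne : (1:ℝ) - x ≠ 0 := by intro h; rw [sub_eq_zero] at h; rw [← h] at h1; norm_num at h1
  have hxne : x ≠ 0 := h0.ne'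
  have : 1 - Jm x = x/(1-x) := by
    unfold Jm
    field_simp
    ring
  rw [this, one_div_div]
  field_simp

lemma Jm_diff {a b : ℝ} (ha : a < 1) (hb : b < 1) :
    Jm a - Jm b = (b - a)/((1-a)*(1-b)) := by
  have h1 : (0:ℝ) < 1 - a := by linarith
  have h2 : (0:ℝ) < 1 - b := by linarith
  unfold Jm
  field_simp
  ring

set_option maxHeartbeats 1600000 in
lemma phi_jstep {k : ℕ}
    (IH : ∀ a b : ℝ, 0 ≤ a → a < b → b ≤ 1 → 1 < (9/4:ℝ)^k * (b-a) → phi a < phi b) :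
    ∀ a b : ℝ, 0 < a → a < b → b < 1/2 → 1 < (9/4:ℝ)^(k+1) * (b-a) → phi a < phi b := by
  intro a b ha0 hab hb2 hbud
  have ha2 : a ≤ 1/2 := by linarith
  have hb1 : b < 1 := by linarith
  have ha1 : a < 1 := by linarith
  have hg2 : (0:ℝ) < gl^2 := by nlinarith [gl_pos]
  have hpk : (0:ℝ) < (9/4:ℝ)^k := by positivity
  -- the J step
  have hJab : Jm b < Jm a := by
    have := Jm_diff ha1 hb1
    nlinarith [mul_pos (by linarith : (0:ℝ) < 1-a) (by linarith : (0:ℝ) < 1-b),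
      div_pos (by linarith : (0:ℝ) < b - a)
        (mul_pos (by linarith : (0:ℝ) < 1-a) (by linarith : (0:ℝ) < 1-b))]
  have hJb0 : 0 < Jm b := by
    unfold Jm; apply div_pos (by linarith) (by linarith)
  have hJa1 : Jm a < 1 := by
    unfold Jm; rw [div_lt_one (by linarith)]; linarith
  have hJa1' : Jm a ≤ 1 := hJa1.le
  have goodJ : phi (Jm b) < phi (Jm a) → phi a < phi b := by
    intro h
    rw [phi_FE1 ha0.le ha2, phi_FE1 (by linarith : (0:ℝ) ≤ b) hb2.le]
    rw [div_lt_div_iff₀ hg2 hg2]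
    nlinarith
  by_cases hc2 : Jm a < 1/2
  · -- interval stays in [0,1/2): definite growth
    have ha3 : 1/3 < a := by
      unfold Jm at hc2
      rw [div_lt_iff₀ (by linarith)] at hc2
      nlinarith
    have hgrow : (9/4) * (b - a) < Jm a - Jm b := by
      rw [Jm_diff ha1 hb1]
      rw [lt_div_iff₀ (mul_pos (by linarith : (0:ℝ) < 1-a) (by linarith : (0:ℝ) < 1-b))]
      have hprod : (1-a)*(1-b) < 4/9 := by nlinarith
      nlinarith [mul_lt_mul_of_pos_left hprod (show (0:ℝ) < b - a by linarith)]
    apply goodJ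
    apply IH _ _ hJb0.le hJab hJa1'
    calc (1:ℝ) < (9/4)^(k+1) * (b-a) := hbud
      _ = (9/4)^k * ((9/4) * (b-a)) := by ring
      _ < (9/4)^k * (Jm a - Jm b) := by
          apply mul_lt_mul_of_pos_left hgrow hpk
  · push_neg at hc2
    by_cases hc3 : Jm b ≤ 1/2
    · exact goodJ (phi_straddle hJb0.le hJab hJa1' hc3 hc2)
    · push_neg at hc3
      have hb3 : b < 1/3 := by
        unfold Jm at hc3
        rw [lt_div_iff₀ (by linarith)] at hc3
        nlinarith
      obtain ⟨n, hn⟩ := exists_nat_ge (1/(1 - Jm b))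
      rcases phi_kphase n (Jm b) (Jm a) hc3.le hJab hJa1
          (by push_cast; linarith) with h | ⟨a', b', h1, h2, h3, h4, h5⟩
      · exact goodJ h
      · -- growth through the K phase
        have hba : (0:ℝ) < b := by linarith
        have hulen : 1/(1-b') - 1/(1-a') = (b-a)/(a*b) := by
          rw [h4, inv_one_sub_Jm ha0 ha2, inv_one_sub_Jm hba hb2.le]
          have e2 : (1:ℝ)/a - 1/b = (b-a)/(a*b) := by
            rw [div_sub_div _ _ ha0.ne' hba.ne', one_mul, mul_one]
          linarith
        have hd1 : (0:ℝ) < 1 - a' := by linarith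
        have hd2 : (0:ℝ) < 1 - b' := by linarith
        have hinv := inv_one_sub_diff (show a' < 1 by linarith) (show b' < 1 by linarith)
        have hblen : b' - a' = (b-a)/(a*b) * ((1-a')*(1-b')) := by
          rw [← hulen, hinv, div_mul_cancel₀]
          exact (mul_pos hd1 hd2).ne'
        have hab' : (0:ℝ) < b - a := by linarith
        have hab0 : (0:ℝ) < a*b := mul_pos ha0 (by linarith)
        have hgrow : (9/4) * (b - a) < b' - a' := by
          rw [hblen]
          have h9 : a*b < 1/9 := by nlinarith
          have hq : (1:ℝ)/2 * (1/2) < (1-a')*(1-b') :=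
            mul_lt_mul'' (by linarith) (by linarith) (by norm_num) (by norm_num)
          have hD : 9 * (b-a) < (b-a)/(a*b) := by
            rw [lt_div_iff₀ hab0]
            nlinarith [mul_lt_mul_of_pos_left h9 hab']
          have := mul_lt_mul'' hD hq (by linarith) (by norm_num)
          linarith
        apply goodJ
        apply h5
        apply IH _ _ h1 h2 (by linarith)
        calc (1:ℝ) < (9/4)^(k+1) * (b-a) := hbud
          _ = (9/4)^k * ((9/4) * (b-a)) := by ring
          _ < (9/4)^k * (b' - a') := mul_lt_mul_of_pos_left hgrow hpk

lemma phi_strict_aux : ∀ k : ℕ, ∀ a b : ℝ, 0 ≤ a → a < b → b ≤ 1 →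
    1 < (9/4:ℝ)^k * (b-a) → phi a < phi b := by
  intro k
  induction k with
  | zero =>
    intro a b h0 hab hb hbud
    rw [pow_zero, one_mul] at hbud
    linarith
  | succ k ih =>
    intro a b h0 hab hb hbud
    rcases eq_or_lt_of_le hb with hb1 | hb1
    · -- b = 1
      subst hb1
      rw [phi_one]
      exact phi_lt_one h0 hab
    rcases eq_or_lt_of_le h0 with ha0 | ha0
    · -- a = 0
      rw [← ha0, phi_zero]
      exact phi_pos (by linarith) hb
    by_cases hstr : a ≤ 1/2 ∧ 1/2 ≤ b
    · exact phi_straddle h0 hab hb hstr.1 hstr.2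
    push_neg at hstr
    by_cases hbh : b < 1/2
    · exact phi_jstep ih a b ha0 hab hbh hbud
    · push_neg at hbh
      have hah : 1/2 < a := by
        rcases le_or_gt a (1/2) with h | h
        · exact absurd hbh (not_le.mpr (hstr h))
        · exact h
      obtain ⟨n, hn⟩ := exists_nat_ge (1/(1-a))
      rcases phi_kphase n a b hah.le hab hb1 (by push_cast; linarith)
        with h | ⟨a', b', h1, h2, h3, h4, h5⟩
      · exact h
      · apply h5
        rcases eq_or_lt_of_le h1 with ha' | ha'
        · rw [← ha', phi_zero]
          exact phi_pos (by linarith) (by linarith)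
        · -- b' - a' > b - a
          have hda : (0:ℝ) < 1 - a := by linarith
          have hdb : (0:ℝ) < 1 - b := by linarith
          have hd1 : (0:ℝ) < 1 - a' := by linarith
          have hd2 : (0:ℝ) < 1 - b' := by linarith
          have hinv := inv_one_sub_diff (show a < 1 by linarith) (show b < 1 by linarith)
          have hinv' := inv_one_sub_diff (show a' < 1 by linarith) (show b' < 1 by linarith)
          rw [hinv, hinv'] at h4
          have hgrow : b - a < b' - a' := by
            have hprod : (1-a)*(1-b) < 1/4 := by nlinarith
            have hprod' : (1:ℝ)/4 < (1-a')*(1-b') := by nlinarith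
            have hpos : (0:ℝ) < (1-a)*(1-b) := mul_pos hda hdb
            have hpos' : (0:ℝ) < (1-a')*(1-b') := mul_pos hd1 hd2
            have hD : (0:ℝ) < (b-a)/((1-a)*(1-b)) := div_pos (by linarith) hpos
            -- from h4 : (b'-a')/prod' = (b-a)/prod
            rw [div_eq_div_iff hpos'.ne' hpos.ne'] at h4
            nlinarith
          apply phi_jstep ih a' b' ha' h2 h3
          calc (1:ℝ) < (9/4)^(k+1) * (b-a) := hbud
            _ < (9/4)^(k+1) * (b'-a') := by
                apply mul_lt_mul_of_pos_left hgrow (by positivity)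

lemma phi_strictOn : ∀ a b : ℝ, 0 ≤ a → a < b → b ≤ 1 → phi a < phi b := by
  intro a b h0 hab hb
  obtain ⟨k, hk⟩ : ∃ k : ℕ, 1/(b-a) < (9/4:ℝ)^k := pow_unbounded_of_one_lt _ (by norm_num)
  apply phi_strict_aux k a b h0 hab hb
  rw [div_lt_iff₀ (by linarith : (0:ℝ) < b - a)] at hk
  linarith

noncomputable def psi (x : ℝ) : ℝ := if x < 0 then -phi (-x) else phi x

lemma psi_nonneg {x : ℝ} (h : 0 ≤ x) : psi x = phi x := by
  unfold psi; rw [if_neg (not_lt.mpr h)]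

lemma psi_neg {x : ℝ} (h : x ≤ 0) : psi x = -phi (-x) := by
  rcases lt_or_eq_of_le h with h | h
  · unfold psi; rw [if_pos h]
  · subst h; unfold psi; simp [phi_zero]

lemma psi_one : psi 1 = 1 := by rw [psi_nonneg (by norm_num), phi_one]

lemma psi_negone : psi (-1) = -1 := by
  rw [psi_neg (by norm_num)]; norm_num [phi_one]

lemma psi_strictMonoOn : StrictMonoOn psi (Icc (-1:ℝ) 1) := by
  intro x hx y hy hxy
  rcases le_or_gt 0 x with h0x | h0x
  · rw [psi_nonneg h0x, psi_nonneg (by linarith : (0:ℝ) ≤ y)]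
    exact phi_strictOn x y h0x hxy hy.2
  · rcases le_or_gt 0 y with h0y | h0y
    · rw [psi_neg h0x.le, psi_nonneg h0y]
      have h1 : 0 < phi (-x) := phi_pos (by linarith) (by linarith [hx.1])
      have h2 : 0 ≤ phi y := (phi_mem ⟨h0y, hy.2⟩).1
      linarith
    · rw [psi_neg h0x.le, psi_neg h0y.le]
      have := phi_strictOn (-y) (-x) (by linarith) (by linarith) (by linarith [hx.1])
      linarith

lemma psi_contOn : ContinuousOn psi (Icc (-1:ℝ) 1) := by
  have hIcc : Icc (-1:ℝ) 1 = Icc (-1:ℝ) 0 ∪ Icc (0:ℝ) 1 := by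
    rw [Icc_union_Icc_eq_Icc] <;> norm_num
  rw [hIcc]
  apply continuousOn_union_closed isClosed_Icc isClosed_Icc
  · have he : EqOn psi (fun x => -phi (-x)) (Icc (-1:ℝ) 0) := fun x hx => psi_neg hx.2
    apply ContinuousOn.congr _ he
    apply ContinuousOn.neg
    apply ContinuousOn.comp phi_contOn continuousOn_neg
    intro x hx
    exact ⟨by linarith [hx.2], by linarith [hx.1]⟩
  · have he : EqOn psi phi (Icc (0:ℝ) 1) := fun x hx => psi_nonneg hx.1
    exact phi_contOn.congr he

lemma sg_mem' {x : ℝ} (h1 : 1/3 ≤ x) (h2 : x ≤ 1/2) : 0 ≤ sg x ∧ sg x ≤ 1/3 := by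
  have hd : (0:ℝ) < 2 - 3*x := by linarith
  unfold sg
  constructor
  · apply div_nonneg (by linarith) hd.le
  · rw [div_le_iff₀ hd]; linarith

lemma goal_T {x : ℝ} (h1 : (-1:ℝ) ≤ x) (h2 : x ≤ -1/2) :
    psi (-2 - 1/x) = gl * psi x + (gl - 1) := by
  have hu1 : 1/2 ≤ -x := by linarith
  have hu2 : -x ≤ 1 := by linarith
  have hK := Km_mem hu1 hu2
  have e : -2 - 1/x = -(Km (-x)) := by
    unfold Km
    rw [one_div_neg_eq_neg_one_div]
    ring
  rw [e, psi_neg (by linarith [hK.1]), neg_neg, psi_neg (by linarith : x ≤ 0)]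
  have := phi_FE2 hu1 hu2
  have hg := gl_pos
  rw [eq_div_iff hg.ne'] at this
  linarith

lemma goal_T2 {x : ℝ} (h1 : (-1/2:ℝ) < x) (h2 : x ≤ -1/3) :
    psi ((1 + 2*x)/(2 + 3*x)) = gl * psi x + (gl - 1) := by
  have hu1 : 1/3 ≤ -x := by linarith
  have hu2 : -x ≤ 1/2 := by linarith
  have hs := sg_mem' hu1 hu2
  have e : (1 + 2*x)/(2 + 3*x) = sg (-x) := by
    unfold sg; ring_nf
  rw [e, psi_nonneg hs.1, psi_neg (by linarith : x ≤ 0)]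
  have hE := phi_E hs.1 hs.2
  rw [sg_invol (by linarith : -x < 2/3)] at hE
  linarith

lemma goal_S_neg {x : ℝ} (h1 : (-1/2:ℝ) ≤ x) (h2 : x < 0) :
    psi (x + 1) = gl * psi x + 1 := by
  have hu1 : (0:ℝ) ≤ -x := by linarith
  have hu2 : -x ≤ 1/2 := by linarith
  have hI := phi_I hu1 hu2
  rw [psi_nonneg (by linarith : (0:ℝ) ≤ x + 1), psi_neg h2.le]
  have e : x + 1 = 1 - (-x) := by ring
  rw [e, hI]
  ring

lemma goal_S_pos {x : ℝ} (h1 : (0:ℝ) < x) (h2 : x ≤ 1/2) :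
    psi (x - 1) = gl * psi x + (-1) := by
  have hI := phi_I h1.le h2
  rw [psi_neg (by linarith : x - 1 ≤ 0), psi_nonneg h1.le]
  have e : -(x - 1) = 1 - x := by ring
  rw [e, hI]
  ring

lemma goal_Tinv1 {x : ℝ} (h1 : (1/3:ℝ) ≤ x) (h2 : x ≤ 1/2) :
    psi ((1 - 2*x)/(3*x - 2)) = gl * psi x + (1 - gl) := by
  have hs := sg_mem' h1 h2
  have hd : (0:ℝ) < 2 - 3*x := by linarith
  have e : (1 - 2*x)/(3*x - 2) = -(sg x) := by
    unfold sg
    rw [show (3*x - 2:ℝ) = -(2 - 3*x) by ring, div_neg]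
  rw [e, psi_neg (by linarith [hs.1]), neg_neg, psi_nonneg (by linarith : (0:ℝ) ≤ x)]
  have hE := phi_E hs.1 hs.2
  rw [sg_invol (by linarith : x < 2/3)] at hE
  linarith

lemma goal_Tinv2 {x : ℝ} (h1 : (1/2:ℝ) < x) (h2 : x ≤ 1) :
    psi (2 - 1/x) = gl * psi x + (1 - gl) := by
  have hK := Km_mem h1.le h2
  have e : 2 - 1/x = Km x := rfl
  rw [e, psi_nonneg hK.1, psi_nonneg (by linarith : (0:ℝ) ≤ x)]
  have := phi_FE2 h1.le h2
  have hg := gl_pos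
  rw [eq_div_iff hg.ne'] at this
  linarith


/-- There is an increasing homeomorphism `ψ` of `[-1,1]` fixing `±1` that simultaneously
conjugates the Artin map `f̃_A` and the Hurwitz map `f̃_H` to maps of constant slope
`λ = (1+√5)/2`: `ψ ∘ f̃_A ∘ ψ⁻¹` is affine with slope `λ` on each of
`ψ([-1,-1/2))`, `ψ([-1/2,0))`, `ψ((0,1/2))`, `ψ([1/2,1))`, and `ψ ∘ f̃_H ∘ ψ⁻¹` is affine
with slope `λ` on each of `ψ([-1,-1/3))`, `ψ([-1/3,0))`, `ψ((0,1/3))`, `ψ([1/3,1))`.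
(The condition "`ψ ∘ f ∘ ψ⁻¹` is affine with slope `λ` on `ψ(I)`" is expressed
equivalently as `∃ c, ∀ x ∈ I, ψ (f x) = λ * ψ x + c`.) -/
theorem exists_common_conjugacy_to_constant_slope :
    ∃ ψ : ℝ → ℝ,
      ContinuousOn ψ (Set.Icc (-1) 1) ∧ StrictMonoOn ψ (Set.Icc (-1) 1) ∧
      ψ (-1) = -1 ∧ ψ 1 = 1 ∧
      (∃ c, ∀ x ∈ Set.Ico (-1 : ℝ) (-1/2),
        ψ (fA x) = (1 + Real.sqrt 5) / 2 * ψ x + c) ∧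
      (∃ c, ∀ x ∈ Set.Ico (-1/2 : ℝ) 0,
        ψ (fA x) = (1 + Real.sqrt 5) / 2 * ψ x + c) ∧
      (∃ c, ∀ x ∈ Set.Ioo (0 : ℝ) (1/2),
        ψ (fA x) = (1 + Real.sqrt 5) / 2 * ψ x + c) ∧
      (∃ c, ∀ x ∈ Set.Ico (1/2 : ℝ) 1,
        ψ (fA x) = (1 + Real.sqrt 5) / 2 * ψ x + c) ∧
      (∃ c, ∀ x ∈ Set.Ico (-1 : ℝ) (-1/3),
        ψ (fH x) = (1 + Real.sqrt 5) / 2 * ψ x + c) ∧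
      (∃ c, ∀ x ∈ Set.Ico (-1/3 : ℝ) 0,
        ψ (fH x) = (1 + Real.sqrt 5) / 2 * ψ x + c) ∧
      (∃ c, ∀ x ∈ Set.Ioo (0 : ℝ) (1/3),
        ψ (fH x) = (1 + Real.sqrt 5) / 2 * ψ x + c) ∧
      (∃ c, ∀ x ∈ Set.Ico (1/3 : ℝ) 1,
        ψ (fH x) = (1 + Real.sqrt 5) / 2 * ψ x + c) := by
  have hgl : (1 + Real.sqrt 5) / 2 = gl := rfl
  refine ⟨psi, psi_contOn, psi_strictMonoOn, psi_negone, psi_one, ?_, ?_, ?_, ?_, ?_, ?_, ?_, ?_⟩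
  · -- Artin, T branch on [-1,-1/2)
    refine ⟨gl - 1, fun x hx => ?_⟩
    obtain ⟨h1, h2⟩ := hx
    have hfa : fA x = -2 - 1/x := by
      unfold fA ftilde Ttilde
      rw [if_pos (by norm_num; linarith : x < (-1:ℝ) / (1 - (-1))),
        if_pos (by linarith : x ≤ -1/2)]
    rw [hfa, hgl]
    exact goal_T h1 (by linarith)
  · -- Artin, S branch on [-1/2,0)
    refine ⟨1, fun x hx => ?_⟩
    obtain ⟨h1, h2⟩ := hx
    have hfa : fA x = x + 1 := by
      unfold fA ftilde Stilde
      rw [if_neg (by norm_num; linarith : ¬ x < (-1:ℝ) / (1 - (-1))),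
        if_pos (by norm_num; linarith : x < (1:ℝ) / (1 + 1)),
        if_pos h2]
    rw [hfa, hgl]
    exact goal_S_neg h1 h2
  · -- Artin, S branch on (0,1/2)
    refine ⟨-1, fun x hx => ?_⟩
    obtain ⟨h1, h2⟩ := hx
    have hfa : fA x = x - 1 := by
      unfold fA ftilde Stilde
      rw [if_neg (by norm_num; linarith : ¬ x < (-1:ℝ) / (1 - (-1))),
        if_pos (by norm_num; linarith : x < (1:ℝ) / (1 + 1)),
        if_neg (by linarith : ¬ x < 0), if_neg (by linarith : ¬ x = 0)]
    rw [hfa, hgl]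
    exact goal_S_pos h1 (by linarith)
  · -- Artin, T⁻¹ branch on [1/2,1)
    refine ⟨1 - gl, fun x hx => ?_⟩
    obtain ⟨h1, h2⟩ := hx
    have hfa : fA x = Tinvtilde x := by
      unfold fA ftilde
      rw [if_neg (by norm_num; linarith : ¬ x < (-1:ℝ) / (1 - (-1))),
        if_neg (by norm_num; linarith : ¬ x < (1:ℝ) / (1 + 1))]
    rw [hfa, hgl]
    rcases eq_or_lt_of_le h1 with he | he
    · have : Tinvtilde x = (1 - 2*x)/(3*x - 2) := by
        unfold Tinvtilde
        rw [if_neg (by linarith : ¬ x ≤ 0), if_pos (by linarith : x ≤ 1/2)]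
      rw [this]
      exact goal_Tinv1 (by linarith) (by linarith)
    · have : Tinvtilde x = 2 - 1/x := by
        unfold Tinvtilde
        rw [if_neg (by linarith : ¬ x ≤ 0), if_neg (by linarith : ¬ x ≤ 1/2)]
      rw [this]
      exact goal_Tinv2 he h2.le
  · -- Hurwitz, T branch on [-1,-1/3)
    refine ⟨gl - 1, fun x hx => ?_⟩
    obtain ⟨h1, h2⟩ := hx
    have hfh : fH x = Ttilde x := by
      unfold fH ftilde
      rw [if_pos (by norm_num; linarith : x < (-1/2:ℝ) / (1 - (-1/2)))]
    rw [hfh, hgl]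
    rcases le_or_gt x (-1/2) with he | he
    · have : Ttilde x = -2 - 1/x := by
        unfold Ttilde
        rw [if_pos (by linarith : x ≤ -1/2)]
      rw [this]
      exact goal_T h1 he
    · have : Ttilde x = (1 + 2*x)/(2 + 3*x) := by
        unfold Ttilde
        rw [if_neg (by linarith : ¬ x ≤ -1/2), if_pos (by linarith : x ≤ 0)]
      rw [this]
      exact goal_T2 he (by linarith)
  · -- Hurwitz, S branch on [-1/3,0)
    refine ⟨1, fun x hx => ?_⟩
    obtain ⟨h1, h2⟩ := hx
    have hfh : fH x = x + 1 := by
      unfold fH ftilde Stilde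
      rw [if_neg (by norm_num; linarith : ¬ x < (-1/2:ℝ) / (1 - (-1/2))),
        if_pos (by norm_num; linarith : x < (1/2:ℝ) / (1 + 1/2)),
        if_pos h2]
    rw [hfh, hgl]
    exact goal_S_neg (by linarith) h2
  · -- Hurwitz, S branch on (0,1/3)
    refine ⟨-1, fun x hx => ?_⟩
    obtain ⟨h1, h2⟩ := hx
    have hfh : fH x = x - 1 := by
      unfold fH ftilde Stilde
      rw [if_neg (by norm_num; linarith : ¬ x < (-1/2:ℝ) / (1 - (-1/2))),
        if_pos (by norm_num; linarith : x < (1/2:ℝ) / (1 + 1/2)),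
        if_neg (by linarith : ¬ x < 0), if_neg (by linarith : ¬ x = 0)]
    rw [hfh, hgl]
    exact goal_S_pos h1 (by linarith)
  · -- Hurwitz, T⁻¹ branch on [1/3,1)
    refine ⟨1 - gl, fun x hx => ?_⟩
    obtain ⟨h1, h2⟩ := hx
    have hfh : fH x = Tinvtilde x := by
      unfold fH ftilde
      rw [if_neg (by norm_num; linarith : ¬ x < (-1/2:ℝ) / (1 - (-1/2))),
        if_neg (by norm_num; linarith : ¬ x < (1/2:ℝ) / (1 + 1/2))]
    rw [hfh, hgl]
    rcases le_or_gt x (1/2) with he | he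
    · have : Tinvtilde x = (1 - 2*x)/(3*x - 2) := by
        unfold Tinvtilde
        rw [if_neg (by linarith : ¬ x ≤ 0), if_pos he]
      rw [this]
      exact goal_Tinv1 h1 he
    · have : Tinvtilde x = 2 - 1/x := by
        unfold Tinvtilde
        rw [if_neg (by linarith : ¬ x ≤ 0), if_neg (by linarith : ¬ x ≤ 1/2)]
      rw [this]
      exact goal_Tinv2 he h2.le
end

section
/- The slow Gauss map is a factor of the Artin continued fraction map via the absolute value: for every real number x with x ∉ {-1, 0}, one has g(|x|) = |f_{-1,1}(x)|. -/
/-- The slow Gauss map `g` (on the positive reals): `g(y) = 1/y` for `0 < y < 1`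
and `g(y) = y - 1` for `y ≥ 1`. -/
noncomputable def slowGauss (y : ℝ) : ℝ :=
  if y < 1 then 1 / y else y - 1

/-- The `(-1,1)`-continued fraction (Artin) map `f_{-1,1} : ℝ → ℝ`. -/
noncomputable def fArtin (x : ℝ) : ℝ :=
  if x < -1 then x + 1 else if x < 1 then -1 / x else x - 1

/-- The slow Gauss map is a factor of the Artin map via the absolute value:
`g(|x|) = |f_{-1,1}(x)|` for all `x ∉ {-1, 0}`. -/
theorem slowGauss_factor_of_artin (x : ℝ) (h1 : x ≠ -1) (h0 : x ≠ 0) :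
    slowGauss |x| = |fArtin x| := by
  unfold slowGauss fArtin
  rcases lt_trichotomy x (-1) with h | h | h
  · rw [abs_of_neg (by linarith), if_neg (by linarith), if_pos h,
      abs_of_neg (by linarith)]
    ring
  · exact absurd h h1
  · rcases lt_trichotomy x 0 with h2 | h2 | h2
    · rw [abs_of_neg h2, if_pos (by linarith), if_neg (not_lt.2 (le_of_lt h)),
        if_pos (by linarith), abs_of_pos (div_pos_of_neg_of_neg (by norm_num) h2)]
      field_simp
    · exact absurd h2 h0
    · rcases lt_or_ge x 1 with h3 | h3
      · rw [abs_of_pos h2, if_pos h3, if_neg (by linarith), if_pos h3,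
          abs_of_neg (div_neg_of_neg_of_pos (by norm_num) h2)]
        field_simp
      · rw [abs_of_pos h2, if_neg (not_lt.2 h3), if_neg (by linarith),
          if_neg (not_lt.2 h3), abs_of_nonneg (by linarith)]
end
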